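/- For any x = ∑_i c_i e_i satisfying P x = P e_j, one has ‖W e_j‖₁ ≤ ‖W x‖₁, i.e., ‖P e_j‖₂ ≤ ∑_i |c_i| ‖P e_i‖₂; moreover the inequality is strict whenever x ≠ e_j, provided no two projected basis vectors are parallel. -/

import Mathlib

open Matrix Finset

noncomputable def enormFin {n : ℕ} (v : Fin n → ℝ) : ℝ := Real.sqrt (∑ i, v i ^ 2)

lemma enorm_eq_norm {n : ℕ} (v : Fin n → ℝ) :
    enormFin v = ‖((WithLp.equiv 2 (Fin n → ℝ)).symm v : EuclideanSpace ℝ (Fin n))‖ := by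
  rw [EuclideanSpace.norm_eq, enormFin]
  congr 1
  refine Finset.sum_congr rfl fun i _ => ?_
  simp [Real.norm_eq_abs, sq_abs]

/-- For any `x = ∑ i, c i • e_i` satisfying `P x = P e_j`, one has
`‖W e_j‖₁ ≤ ‖W x‖₁`, i.e. `‖P e_j‖₂ ≤ ∑ i, |c i| * ‖P e_i‖₂`; moreover the inequality is strict
whenever `x ≠ e_j`, provided no two projected basis vectors are parallel. -/
theorem weighted_l1_lower_bound {n : ℕ}
    (P : Matrix (Fin n) (Fin n) ℝ) (hsymm : Pᵀ = P) (hidem : P * P = P)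
    (hnz : ∀ i : Fin n, P.mulVec (Pi.single i 1) ≠ 0)
    (j : Fin n) :
    (∀ c : Fin n → ℝ,
        P.mulVec (fun k => c k) = P.mulVec (Pi.single j 1) →
        enormFin (P.mulVec (Pi.single j 1)) ≤ ∑ i, |c i| * enormFin (P.mulVec (Pi.single i 1)))
    ∧
    ((∀ i : Fin n, i ≠ j → ∀ cc : ℝ,
        P.mulVec (Pi.single j 1) ≠ cc • P.mulVec (Pi.single i 1)) →
      ∀ c : Fin n → ℝ,
        P.mulVec (fun k => c k) = P.mulVec (Pi.single j 1) →
        (fun k => c k) ≠ (Pi.single j 1 : Fin n → ℝ) →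
        enormFin (P.mulVec (Pi.single j 1)) < ∑ i, |c i| * enormFin (P.mulVec (Pi.single i 1))) := by
  set E := EuclideanSpace ℝ (Fin n)
  let f : (Fin n → ℝ) ≃ₗ[ℝ] E := (WithLp.linearEquiv 2 ℝ (Fin n → ℝ)).symm
  set v : Fin n → Fin n → ℝ := fun i => P.mulVec (Pi.single i 1) with hv
  set u : Fin n → E := fun i => f (v i) with hu
  have hfin : ∀ w : Fin n → ℝ, enormFin w = ‖f w‖ := fun w => enorm_eq_norm w
  have hunz : ∀ i, u i ≠ 0 := by
    intro i h
    exact hnz i (f.map_eq_zero_iff.mp h)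
  -- decomposition
  have hdec : ∀ c : Fin n → ℝ, P.mulVec (fun k => c k) = ∑ i, c i • v i := by
    intro c
    have hc : (fun k => c k) = ∑ i, c i • (Pi.single i 1 : Fin n → ℝ) := by
      funext k
      simp [Finset.sum_apply, Pi.single_apply, mul_comm]
    rw [hc]
    simp only [← Matrix.mulVecLin_apply, map_sum, _root_.map_smul]
    simp only [Matrix.mulVecLin_apply, hv]
  have hfdec : ∀ c : Fin n → ℝ, f (P.mulVec (fun k => c k)) = ∑ i, c i • u i := by
    intro c
    rw [hdec c, map_sum]
    simp only [_root_.map_smul, hu]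
  have hle : ∀ c : Fin n → ℝ,
      P.mulVec (fun k => c k) = P.mulVec (Pi.single j 1) →
      enormFin (P.mulVec (Pi.single j 1)) ≤ ∑ i, |c i| * enormFin (P.mulVec (Pi.single i 1)) := by
    intro c hc
    have h1 : (u j : E) = ∑ i, c i • u i := by rw [← hfdec c, hc]
    calc enormFin (v j) = ‖u j‖ := hfin _
      _ = ‖∑ i, c i • u i‖ := by rw [h1]
      _ ≤ ∑ i, ‖c i • u i‖ := norm_sum_le _ _
      _ = ∑ i, |c i| * enormFin (v i) := by
          refine Finset.sum_congr rfl fun i _ => ?_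
          rw [norm_smul, Real.norm_eq_abs, hfin]
  refine ⟨hle, ?_⟩
  intro hnp c hc hne
  rcases lt_or_eq_of_le (hle c hc) with h | h
  · exact h
  exfalso
  have h1 : (u j : E) = ∑ i, c i • u i := by rw [← hfdec c, hc]
  by_cases hex : ∃ i, i ≠ j ∧ c i ≠ 0
  · obtain ⟨i₀, hi₀j, hci₀⟩ := hex
    set a : E := c i₀ • u i₀ with ha
    set rest : E := ∑ i ∈ Finset.univ.erase i₀, c i • u i with hrest
    have hsplit : (u j : E) = a + rest := by
      rw [h1, hrest, ha, ← Finset.add_sum_erase _ _ (Finset.mem_univ i₀)]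
    have hchain : ‖u j‖ ≤ ‖a‖ + ‖rest‖ := by
      rw [hsplit]; exact norm_add_le _ _
    have hrest_le : ‖rest‖ ≤ ∑ i ∈ Finset.univ.erase i₀, ‖c i • u i‖ := norm_sum_le _ _
    have htot : ‖u j‖ = ∑ i, ‖c i • u i‖ := by
      rw [← hfin (v j), h]
      refine (Finset.sum_congr rfl fun i _ => ?_).symm
      rw [norm_smul, Real.norm_eq_abs, hfin]
    have hsum_split : ∑ i, ‖c i • u i‖ = ‖a‖ + ∑ i ∈ Finset.univ.erase i₀, ‖c i • u i‖ := by
      rw [← Finset.add_sum_erase _ _ (Finset.mem_univ i₀)]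
    have heq : ‖a + rest‖ = ‖a‖ + ‖rest‖ := by
      refine le_antisymm (norm_add_le _ _) ?_
      have : ‖a‖ + ‖rest‖ ≤ ‖u j‖ := by
        rw [htot, hsum_split]
        linarith [hrest_le]
      calc ‖a‖ + ‖rest‖ ≤ ‖u j‖ := this
        _ = ‖a + rest‖ := by rw [hsplit]
    have hray : SameRay ℝ a rest := sameRay_iff_norm_add.mpr heq
    have hray2 : SameRay ℝ a (u j) := by
      rw [hsplit]
      exact (SameRay.refl a).add_right hray
    have ha0 : a ≠ 0 := smul_ne_zero hci₀ (hunz i₀)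
    obtain ⟨r, hr, hreq⟩ := hray2.exists_pos_left ha0 (hunz j)
    -- u j = r • a = (r * c i₀) • u i₀
    have : u j = (r * c i₀) • u i₀ := by
      rw [← hreq, ha, smul_smul]
    have hvj : v j = (r * c i₀) • v i₀ := by
      apply f.injective
      rw [_root_.map_smul]
      exact this
    exact hnp i₀ hi₀j (r * c i₀) hvj
  · push_neg at hex
    have hcj : P.mulVec (fun k => c k) = c j • v j := by
      rw [hdec c]
      rw [Finset.sum_eq_single j]
      · intro i _ hij; rw [hex i hij, zero_smul]
      · intro h'; exact absurd (Finset.mem_univ j) h'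
    have : c j • v j = v j := by rw [← hcj, hc]
    have hcj1 : c j = 1 := by
      by_contra hne1
      have : (c j - 1) • v j = 0 := by
        rw [sub_smul, one_smul, this, sub_self]
      exact hnz j ((smul_eq_zero.mp this).resolve_left (sub_ne_zero.mpr hne1))
    apply hne
    funext k
    by_cases hk : k = j
    · subst hk; simp [hcj1]
    · simp [hex k hk, Pi.single_apply, hk]
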